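/- Let s, n be positive integers with n ≥ 2s + 1 and let l be an integer with 1 ≤ l ≤ s - 1. Then the function x_l(β) = tan(lβ/(2n)) / tan(sβ/(2n)) is strictly decreasing in β on the interval (0, 2π]. -/

import Mathlib

open Real

lemma sinc_strictAntiOn : StrictAntiOn (fun x : ℝ => Real.sin x / x) (Set.Ioc 0 π) := by
  apply strictAntiOn_of_deriv_neg (convex_Ioc 0 π)
  · exact Real.continuousOn_sin.div continuousOn_id (fun x hx => ne_of_gt hx.1)
  · rw [interior_Ioc]
    intro x hx
    have hx0 : (x : ℝ) ≠ 0 := ne_of_gt hx.1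
    have hd : HasDerivAt (fun x : ℝ => Real.sin x / x)
        ((Real.cos x * x - Real.sin x * 1) / x ^ 2) x :=
      (Real.hasDerivAt_sin x).div (hasDerivAt_id x) hx0
    rw [hd.deriv]
    apply div_neg_of_neg_of_pos _ (by positivity)
    rw [mul_one, sub_neg]
    rcases lt_or_ge x (π / 2) with h | h
    · have hc : 0 < Real.cos x := Real.cos_pos_of_mem_Ioo ⟨by linarith [hx.1], h⟩
      have ht : x < Real.tan x := Real.lt_tan hx.1 h
      rw [Real.tan_eq_sin_div_cos] at ht
      calc Real.cos x * x < Real.cos x * (Real.sin x / Real.cos x) :=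
            mul_lt_mul_of_pos_left ht hc
        _ = Real.sin x := by field_simp
    · have hc : Real.cos x ≤ 0 :=
        Real.cos_nonpos_of_pi_div_two_le_of_le h (by linarith [hx.2, Real.pi_pos])
      have hs : 0 < Real.sin x := Real.sin_pos_of_pos_of_lt_pi hx.1 hx.2
      nlinarith [hx.1]

theorem xl_strictAnti (s n l : ℕ) (hs : 0 < s) (hn : n ≥ 2 * s + 1)
    (hl : 1 ≤ l) (hls : l ≤ s - 1) :
    StrictAntiOn
      (fun β : ℝ => Real.tan (l * β / (2 * n)) / Real.tan (s * β / (2 * n)))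
      (Set.Ioc 0 (2 * π)) := by
  have hpi := Real.pi_pos
  have hls' : l < s := by omega
  have hn0 : 0 < n := by omega
  have hL : (1 : ℝ) ≤ l := by exact_mod_cast hl
  have hLS : (l : ℝ) < s := by exact_mod_cast hls'
  have hS : (0 : ℝ) < s := by exact_mod_cast hs
  have hN : (0 : ℝ) < n := by exact_mod_cast hn0
  have hnS : (2 * s + 1 : ℝ) ≤ n := by exact_mod_cast hn
  -- bounds on the arguments
  have key : ∀ β : ℝ, 0 < β → β ≤ 2 * π →
      0 < (l : ℝ) * β / (2 * n) ∧ (l : ℝ) * β / (2 * n) < (s : ℝ) * β / (2 * n) ∧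
      (s : ℝ) * β / (2 * n) < π / 2 := by
    intro β hb1 hb2
    refine ⟨by positivity, ?_, ?_⟩
    · apply div_lt_div_of_pos_right _ (by positivity)
      exact mul_lt_mul_of_pos_right hLS hb1
    · rw [div_lt_div_iff₀ (by positivity) (by norm_num)]
      nlinarith [mul_le_mul_of_nonneg_left hb2 hS.le]
  have hderiv : ∀ β : ℝ, 0 < β → β ≤ 2 * π →
      HasDerivAt (fun β : ℝ => Real.tan (l * β / (2 * n)) / Real.tan (s * β / (2 * n)))
        (((l / (2 * n)) * (1 / Real.cos (l * β / (2 * n)) ^ 2) * Real.tan (s * β / (2 * n)) -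
          Real.tan (l * β / (2 * n)) * ((s / (2 * n)) * (1 / Real.cos (s * β / (2 * n)) ^ 2))) /
          Real.tan (s * β / (2 * n)) ^ 2) β := by
    intro β hb1 hb2
    obtain ⟨ha0, hab, hb⟩ := key β hb1 hb2
    set a := (l : ℝ) * β / (2 * n)
    set b := (s : ℝ) * β / (2 * n)
    have hca : Real.cos a ≠ 0 :=
      ne_of_gt (Real.cos_pos_of_mem_Ioo ⟨by linarith, by linarith⟩)
    have hcb : Real.cos b ≠ 0 :=
      ne_of_gt (Real.cos_pos_of_mem_Ioo ⟨by linarith, hb⟩)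
    have htb : Real.tan b ≠ 0 :=
      ne_of_gt (Real.tan_pos_of_pos_of_lt_pi_div_two (by linarith) hb)
    have hA : HasDerivAt (fun β : ℝ => Real.tan (l * β / (2 * n)))
        ((1 / Real.cos a ^ 2) * (l / (2 * n))) β := by
      have h1 : HasDerivAt (fun β : ℝ => (l : ℝ) * β / (2 * n)) (l / (2 * n)) β := by
        simpa [mul_div_assoc] using
          ((hasDerivAt_id β).const_mul ((l : ℝ))).div_const (2 * n)
      exact (Real.hasDerivAt_tan hca).comp β h1
    have hB : HasDerivAt (fun β : ℝ => Real.tan (s * β / (2 * n)))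
        ((1 / Real.cos b ^ 2) * (s / (2 * n))) β := by
      have h1 : HasDerivAt (fun β : ℝ => (s : ℝ) * β / (2 * n)) (s / (2 * n)) β := by
        simpa [mul_div_assoc] using
          ((hasDerivAt_id β).const_mul ((s : ℝ))).div_const (2 * n)
      exact (Real.hasDerivAt_tan hcb).comp β h1
    have := hA.div hB htb
    exact this.congr_deriv (by ring)
  apply strictAntiOn_of_deriv_neg (convex_Ioc 0 (2 * π))
  · intro β hb
    exact (hderiv β hb.1 hb.2).continuousAt.continuousWithinAt
  · rw [interior_Ioc]
    intro β hb
    rw [(hderiv β hb.1 hb.2.le).deriv]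
    obtain ⟨ha0, hab, hbb⟩ := key β hb.1 hb.2.le
    set a := (l : ℝ) * β / (2 * n) with hadef
    set b := (s : ℝ) * β / (2 * n) with hbdef
    have hca : 0 < Real.cos a := Real.cos_pos_of_mem_Ioo ⟨by linarith, by linarith⟩
    have hcb : 0 < Real.cos b := Real.cos_pos_of_mem_Ioo ⟨by linarith, hbb⟩
    have hca' : Real.cos a ≠ 0 := ne_of_gt hca
    have hcb' : Real.cos b ≠ 0 := ne_of_gt hcb
    have hN' : (n : ℝ) ≠ 0 := ne_of_gt hN
    have hsa : 0 < Real.sin a := Real.sin_pos_of_pos_of_lt_pi ha0 (by linarith)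
    have hsb : 0 < Real.sin b := Real.sin_pos_of_pos_of_lt_pi (by linarith) (by linarith)
    have htb : 0 < Real.tan b := Real.tan_pos_of_pos_of_lt_pi_div_two (by linarith) hbb
    apply div_neg_of_neg_of_pos _ (by positivity)
    rw [sub_neg]
    -- key: l * sin b * cos b < s * sin a * cos a
    have hkey : (l : ℝ) * (Real.sin b * Real.cos b) < s * (Real.sin a * Real.cos a) := by
      have h2a : (2 : ℝ) * a = l * β / n := by rw [hadef]; ring
      have h2b : (2 : ℝ) * b = s * β / n := by rw [hbdef]; ring
      have hvpi : 2 * b ≤ π := by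
        rw [h2b, div_le_iff₀ hN]
        nlinarith [hb.2]
      have h := sinc_strictAntiOn (Set.mem_Ioc.2 ⟨by linarith, by linarith⟩)
        (Set.mem_Ioc.2 ⟨by linarith, hvpi⟩) (by linarith : 2 * a < 2 * b)
      rw [div_lt_div_iff₀ (by linarith) (by linarith)] at h
      rw [Real.sin_two_mul, Real.sin_two_mul] at h
      have hβN : 0 < β / (n:ℝ) := div_pos hb.1 hN
      have h' : 2 * Real.sin b * Real.cos b * ((l : ℝ) * (β / n)) <
          2 * Real.sin a * Real.cos a * ((s : ℝ) * (β / n)) := by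
        calc 2 * Real.sin b * Real.cos b * ((l : ℝ) * (β / n))
            = 2 * Real.sin b * Real.cos b * (2 * a) := by rw [h2a]; ring
          _ < 2 * Real.sin a * Real.cos a * (2 * b) := h
          _ = 2 * Real.sin a * Real.cos a * ((s : ℝ) * (β / n)) := by rw [h2b]; ring
      nlinarith [h', hβN]
    have hpos : (0 : ℝ) < 2 * n * Real.cos a ^ 2 * Real.cos b ^ 2 := by positivity
    rw [← mul_lt_mul_iff_of_pos_right hpos]
    have eX : (l : ℝ) / (2 * n) * (1 / Real.cos a ^ 2) * Real.tan b *
        (2 * n * Real.cos a ^ 2 * Real.cos b ^ 2) = l * (Real.sin b * Real.cos b) := by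
      rw [Real.tan_eq_sin_div_cos]; field_simp
    have eY : Real.tan a * ((s : ℝ) / (2 * n) * (1 / Real.cos b ^ 2)) *
        (2 * n * Real.cos a ^ 2 * Real.cos b ^ 2) = s * (Real.sin a * Real.cos a) := by
      rw [Real.tan_eq_sin_div_cos]; field_simp
    rw [eX, eY]
    exact hkey
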